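/- arXiv:1708.01905 — 4 statements merged into one kernel-verified Lean document; each statement's English description precedes it below -/
import Mathlib

section
/- If A is a set of positive integers with upper Banach density δ(A) = 1, then A contains an infinite sequence (B_i)_{i=1}^∞ of pairwise disjoint subsets such that δ(B_i) = 1 for every i ∈ ℕ and, for every nonempty finite set I of positive integers, the sumset ∑_{i∈I} B_i = { ∑_{i∈I} a_i : a_i ∈ B_i for each i ∈ I } is contained in A. -/
open Filter Set

/-- `bF A n = max_{u ∈ ℕ₀} |A ∩ [u, u+n-1]|`. -/
noncomputable def bF (A : Set ℕ) (n : ℕ) : ℕ :=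
  ⨆ u : ℕ, (A ∩ Set.Icc u (u + n - 1)).ncard

/-- Upper Banach density `δ(A) = limsup_{n→∞} bF A n / n`. -/
noncomputable def ubd (A : Set ℕ) : ℝ :=
  Filter.limsup (fun n : ℕ => (bF A n : ℝ) / n) Filter.atTop

/-- The sumset `∑_{i ∈ I} B i = { ∑_{i∈I} a i : a i ∈ B i for each i ∈ I }`. -/
def sumset (B : ℕ → Set ℕ) (I : Finset ℕ) : Set ℕ :=
  {s : ℕ | ∃ a : ℕ → ℕ, (∀ i ∈ I, a i ∈ B i) ∧ s = ∑ i ∈ I, a i}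

/-! ### Auxiliary lemmas about `bF` and `ubd` -/

lemma ncard_window_eq (u n : ℕ) (hn : 1 ≤ n) : (Set.Icc u (u + n - 1)).ncard = n := by
  rw [← Finset.coe_Icc, Set.ncard_coe_finset, Nat.card_Icc]
  omega

lemma term_le (A : Set ℕ) (u n : ℕ) : (A ∩ Set.Icc u (u + n - 1)).ncard ≤ max 1 n := by
  refine le_trans (Set.ncard_le_ncard Set.inter_subset_right (Set.finite_Icc _ _)) ?_
  rw [← Finset.coe_Icc, Set.ncard_coe_finset, Nat.card_Icc]
  omega

lemma bF_le (A : Set ℕ) (n : ℕ) (hn : 1 ≤ n) : bF A n ≤ n :=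
  ciSup_le' fun u => le_trans (term_le A u n) (by omega)

lemma bF_bddAbove (A : Set ℕ) (n : ℕ) :
    BddAbove (Set.range fun u => (A ∩ Set.Icc u (u + n - 1)).ncard) :=
  ⟨max 1 n, by rintro x ⟨u, rfl⟩; exact term_le A u n⟩

lemma bF_eq_of_interval {B : Set ℕ} {v n : ℕ} (hn : 1 ≤ n)
    (h : Set.Icc v (v + n - 1) ⊆ B) : bF B n = n := by
  refine le_antisymm (bF_le B n hn) ?_
  have : (B ∩ Set.Icc v (v + n - 1)).ncard = n := by
    rw [Set.inter_eq_self_of_subset_right h, ncard_window_eq v n hn]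
  calc n = (B ∩ Set.Icc v (v + n - 1)).ncard := this.symm
    _ ≤ bF B n := le_ciSup (bF_bddAbove B n) v

lemma ubd_eq_one_of_intervals (B : Set ℕ) (h : ∀ m, ∃ v, Set.Icc v (v + m) ⊆ B) :
    ubd B = 1 := by
  have he : ∀ᶠ n : ℕ in atTop, (bF B n : ℝ) / n = 1 := by
    filter_upwards [Filter.eventually_ge_atTop 1] with n hn
    obtain ⟨v, hv⟩ := h (n - 1)
    have : bF B n = n := bF_eq_of_interval hn (by rwa [show v + n - 1 = v + (n-1) by omega])
    rw [this, div_self (Nat.cast_pos.mpr hn).ne']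
  rw [ubd, Filter.limsup_congr he, Filter.limsup_const]

lemma count_bound {A : Set ℕ} {L : ℕ} (c : ℕ → ℕ)
    (hc1 : ∀ u, c u ∈ Set.Icc u (u + L)) (hc2 : ∀ u, c u ∉ A)
    (u n : ℕ) (hn : 1 ≤ n) :
    (A ∩ Set.Icc u (u + n - 1)).ncard ≤ n - n / (L + 1) := by
  set k := n / (L + 1) with hk
  set g : ℕ → ℕ := fun j => c (u + j * (L + 1)) with hg
  have hmem : ∀ j, u + j * (L+1) ≤ g j ∧ g j ≤ u + j * (L+1) + L := fun j => by
    have := hc1 (u + j * (L+1)); simpa [hg] using this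
  have hsm : StrictMono g := by
    intro a b hab
    have h1 := (hmem a).2
    have h2 := (hmem b).1
    have : u + a * (L+1) + L < u + b * (L+1) := by
      have : a * (L+1) + (L+1) ≤ b * (L+1) := by
        have : a + 1 ≤ b := hab
        calc a * (L+1) + (L+1) = (a+1)*(L+1) := by ring
          _ ≤ b * (L+1) := Nat.mul_le_mul_right _ this
      omega
    omega
  set P : Finset ℕ := (Finset.range k).image g with hP
  have hPcard : P.card = k := by
    rw [hP, Finset.card_image_of_injective _ hsm.injective, Finset.card_range]
  have hPsub : (P : Set ℕ) ⊆ Set.Icc u (u + n - 1) := by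
    intro x hx
    simp only [hP, Finset.coe_image, Finset.coe_range, Set.mem_image, Set.mem_Iio] at hx
    obtain ⟨j, hj, rfl⟩ := hx
    have h1 := (hmem j).1
    have h2 := (hmem j).2
    have hjk : j + 1 ≤ k := hj
    have : (j+1) * (L+1) ≤ k * (L+1) := Nat.mul_le_mul_right _ hjk
    have hkn : k * (L + 1) ≤ n := Nat.div_mul_le_self n (L+1)
    have h3 : j*(L+1) + (L+1) ≤ n := by nlinarith
    constructor <;> omega
  have hPA : ∀ x ∈ P, x ∉ A := by
    intro x hx
    simp only [hP, Finset.mem_image] at hx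
    obtain ⟨j, _, rfl⟩ := hx
    exact hc2 _
  have hsub : A ∩ Set.Icc u (u + n - 1) ⊆ Set.Icc u (u + n - 1) \ (P : Set ℕ) := by
    rintro x ⟨hxA, hxI⟩
    exact ⟨hxI, fun hxP => hPA x (by exact_mod_cast hxP) hxA⟩
  calc (A ∩ Set.Icc u (u + n - 1)).ncard
      ≤ (Set.Icc u (u + n - 1) \ (P : Set ℕ)).ncard :=
        Set.ncard_le_ncard hsub ((Set.finite_Icc _ _).diff)
    _ = (Set.Icc u (u + n - 1)).ncard - (P : Set ℕ).ncard :=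
        Set.ncard_diff hPsub (P.finite_toSet)
    _ ≤ n - k := by
        rw [Set.ncard_coe_finset, hPcard, ← Finset.coe_Icc, Set.ncard_coe_finset, Nat.card_Icc]
        omega

lemma exists_interval_of_ubd_one {A : Set ℕ} (hA : ubd A = 1) (L : ℕ) :
    ∃ u, Set.Icc u (u + L) ⊆ A := by
  by_contra hc
  push_neg at hc
  have h : ∀ u, ∃ x, x ∈ Set.Icc u (u + L) ∧ x ∉ A := by
    intro u
    obtain ⟨x, hx1, hx2⟩ := Set.not_subset.mp (hc u)
    exact ⟨x, hx1, hx2⟩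
  choose c hc1 hc2 using h
  have hbF : ∀ n, 1 ≤ n → bF A n ≤ n - n / (L + 1) := fun n hn =>
    ciSup_le' fun u => count_bound c hc1 hc2 u n hn
  have key : ubd A ≤ 1 - 1 / (2 * (L + 1)) := by
    apply Filter.limsup_le_of_le
    · refine Filter.IsBoundedUnder.isCoboundedUnder_le ⟨(0:ℝ), ?_⟩
      rw [Filter.eventually_map]
      filter_upwards with n
      exact div_nonneg (Nat.cast_nonneg _) (Nat.cast_nonneg _)
    · filter_upwards [Filter.eventually_ge_atTop (max 1 (2 * L))] with n hn
      have hn1 : 1 ≤ n := le_trans (le_max_left _ _) hn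
      have hn2 : 2 * L ≤ n := le_trans (le_max_right _ _) hn
      set k := n / (L + 1) with hk
      have hb := hbF n hn1
      have hkL : n - L ≤ (L + 1) * k := by
        have h2 : n % (L+1) ≤ L := Nat.lt_succ_iff.mp (Nat.mod_lt n (Nat.succ_pos L))
        have h3 := Nat.div_add_mod n (L+1)
        rw [hk]
        omega
      have hkn : k ≤ n := Nat.div_le_self n (L+1)
      have hbr : (bF A n : ℝ) ≤ (n : ℝ) - k := by
        have : (bF A n : ℝ) ≤ ((n - k : ℕ) : ℝ) := Nat.cast_le.mpr hb
        rw [Nat.cast_sub hkn] at this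
        exact this
      have hkr : ((n : ℝ) - L) ≤ ((L:ℝ) + 1) * k := by
        have hLn : L ≤ n := by omega
        have h5 : ((n - L : ℕ) : ℝ) ≤ (((L+1) * k : ℕ) : ℝ) := Nat.cast_le.mpr hkL
        rw [Nat.cast_sub hLn] at h5
        push_cast at h5
        linarith
      have hnr : (1:ℝ) ≤ n := by exact_mod_cast hn1
      have hnL : (2:ℝ) * L ≤ n := by exact_mod_cast hn2
      rw [div_le_iff₀ (by linarith)]
      have hLpos : (0:ℝ) < (L:ℝ) + 1 := by positivity
      have hmain : (n:ℝ) ≤ 2 * ((L:ℝ)+1) * k := by nlinarith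
      have heq : (1 - 1/(2*((L:ℝ)+1))) * n = (n:ℝ) - n / (2*((L:ℝ)+1)) := by
        field_simp
      rw [heq]
      have : (n:ℝ) / (2*((L:ℝ)+1)) ≤ k := by
        rw [div_le_iff₀ (by positivity)]; nlinarith
      linarith
  rw [hA] at key
  have : (0:ℝ) < 1 / (2 * (L + 1)) := by positivity
  linarith

/-! ### The recursive block construction -/

/-- Recursive blocks: `g L` is the start of an interval of length `L+1` contained in `A`.
`(blk g n).1` is the start of the `n`-th block, `(blk g n).2` the accumulated bound. -/
noncomputable def blk (g : ℕ → ℕ) : ℕ → ℕ × ℕ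
  | 0 => (g 1 + 1, 0)
  | n+1 =>
    let p := blk g n
    let S := p.2 + p.1 + n
    (g (2*S + n + 2) + S + 1, S)

noncomputable def vv (g : ℕ → ℕ) (n : ℕ) : ℕ := (blk g n).1
noncomputable def Sf (g : ℕ → ℕ) (n : ℕ) : ℕ := (blk g n).2

lemma Sf_succ (g : ℕ → ℕ) (n : ℕ) : Sf g (n+1) = Sf g n + vv g n + n := rfl

lemma vv_eq (g : ℕ → ℕ) (n : ℕ) :
    vv g n = g (2 * Sf g n + n + 1) + Sf g n + 1 := by
  cases n with
  | zero => rfl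
  | succ m =>
    show (blk g (m+1)).1 = _
    rw [blk]
    rfl

lemma Sf_eq_sum (g : ℕ → ℕ) (n : ℕ) :
    Sf g n = ∑ m ∈ Finset.range n, (vv g m + m) := by
  induction n with
  | zero => rfl
  | succ m ih => rw [Finset.sum_range_succ, ← ih, Sf_succ]; ring

lemma lt_vv (g : ℕ → ℕ) {m n : ℕ} (h : m < n) : vv g m + m < vv g n := by
  have h1 : vv g m + m ≤ Sf g n := by
    rw [Sf_eq_sum]
    exact Finset.single_le_sum (f := fun m => vv g m + m) (fun _ _ => Nat.zero_le _)
      (Finset.mem_range.mpr h)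
  have h2 : Sf g n < vv g n := by rw [vv_eq]; omega
  omega

lemma blk_subset {A : Set ℕ} {g : ℕ → ℕ} (hg : ∀ L, Set.Icc (g L) (g L + L) ⊆ A)
    (n : ℕ) : Set.Icc (vv g n) (vv g n + n) ⊆ A := by
  intro x hx
  apply hg (2 * Sf g n + n + 1)
  rw [vv_eq] at hx
  simp only [Set.mem_Icc] at hx ⊢
  omega

lemma sum_mem_blk {A : Set ℕ} {g : ℕ → ℕ} (hg : ∀ L, Set.Icc (g L) (g L + L) ⊆ A)
    (F : Finset ℕ) (hF : F.Nonempty) (b : ℕ → ℕ)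
    (hb : ∀ m ∈ F, b m ∈ Set.Icc (vv g m) (vv g m + m)) :
    (∑ m ∈ F, b m) ∈ A := by
  set n := F.max' hF with hn
  have hnF : n ∈ F := F.max'_mem hF
  have hsplit : ∑ m ∈ F, b m = b n + ∑ m ∈ F.erase n, b m :=
    (Finset.add_sum_erase F b hnF).symm
  have hE : ∑ m ∈ F.erase n, b m ≤ Sf g n := by
    calc ∑ m ∈ F.erase n, b m ≤ ∑ m ∈ F.erase n, (vv g m + m) := by
          apply Finset.sum_le_sum
          intro m hm
          exact ((hb m (Finset.mem_of_mem_erase hm)).2)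
      _ ≤ ∑ m ∈ Finset.range n, (vv g m + m) := by
          apply Finset.sum_le_sum_of_subset
          intro m hm
          rw [Finset.mem_range]
          have h1 := Finset.ne_of_mem_erase hm
          have h2 := F.le_max' m (Finset.mem_of_mem_erase hm)
          omega
      _ = Sf g n := (Sf_eq_sum g n).symm
  have hbn := hb n hnF
  simp only [Set.mem_Icc] at hbn
  apply hg (2 * Sf g n + n + 1)
  have hv := vv_eq g n
  simp only [Set.mem_Icc]
  omega

lemma block_disj {g : ℕ → ℕ} {m n x : ℕ} (hmn : m ≠ n)
    (hx : x ∈ Set.Icc (vv g m) (vv g m + m)) (hy : x ∈ Set.Icc (vv g n) (vv g n + n)) :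
    False := by
  simp only [Set.mem_Icc] at hx hy
  rcases Nat.lt_or_ge m n with h | h
  · have := lt_vv g h; omega
  · have : n < m := by omega
    have := lt_vv g this; omega

lemma main_construction (A : Set ℕ) (g : ℕ → ℕ)
    (hg : ∀ L, Set.Icc (g L) (g L + L) ⊆ A) :
    ∃ B : ℕ → Set ℕ,
      (∀ i, B i ⊆ A) ∧
      Pairwise (Function.onFun Disjoint B) ∧
      (∀ i, ∀ m, ∃ v, Set.Icc v (v + m) ⊆ B i) ∧
      (∀ I : Finset ℕ, I.Nonempty → sumset B I ⊆ A) := by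
  refine ⟨fun i => ⋃ j : ℕ, Set.Icc (vv g (Nat.pair i j)) (vv g (Nat.pair i j) + Nat.pair i j),
    ?_, ?_, ?_, ?_⟩
  · intro i x hx
    simp only [Set.mem_iUnion] at hx
    obtain ⟨j, hj⟩ := hx
    exact blk_subset hg _ hj
  · intro i i' hii'
    rw [Function.onFun, Set.disjoint_left]
    intro x hx hy
    simp only [Set.mem_iUnion] at hx hy
    obtain ⟨j, hj⟩ := hx
    obtain ⟨j', hj'⟩ := hy
    exact block_disj (fun h => hii' (Nat.pair_eq_pair.mp h).1) hj hj'
  · intro i m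
    refine ⟨vv g (Nat.pair i m), ?_⟩
    intro x hx
    simp only [Set.mem_iUnion]
    refine ⟨m, ?_⟩
    have := Nat.right_le_pair i m
    simp only [Set.mem_Icc] at hx ⊢
    omega
  · intro I hI s hs
    obtain ⟨a, ha, rfl⟩ := hs
    have hch : ∀ i, ∃ j, i ∈ I → a i ∈
        Set.Icc (vv g (Nat.pair i j)) (vv g (Nat.pair i j) + Nat.pair i j) := by
      intro i
      by_cases hiI : i ∈ I
      · have := ha i hiI
        simp only [Set.mem_iUnion] at this
        obtain ⟨j, hj⟩ := this
        exact ⟨j, fun _ => hj⟩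
      · exact ⟨0, fun h => absurd h hiI⟩
    choose j hj using hch
    classical
    set F : Finset ℕ := I.image (fun i => Nat.pair i (j i)) with hF
    have hinj : ∀ x ∈ I, ∀ y ∈ I, Nat.pair x (j x) = Nat.pair y (j y) → x = y :=
      fun x _ y _ h => (Nat.pair_eq_pair.mp h).1
    have hsum : ∑ m ∈ F, a (Nat.unpair m).1 = ∑ i ∈ I, a i := by
      rw [hF, Finset.sum_image hinj]
      apply Finset.sum_congr rfl
      intro i _
      rw [Nat.unpair_pair]
    rw [← hsum]
    apply sum_mem_blk hg F (hI.image _)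
    intro m hm
    rw [hF, Finset.mem_image] at hm
    obtain ⟨i, hiI, rfl⟩ := hm
    rw [Nat.unpair_pair]
    exact hj i hiI

theorem erdos_sumset_density_one (A : Set ℕ) (hApos : ∀ a ∈ A, 0 < a)
    (hA : ubd A = 1) :
    ∃ B : ℕ → Set ℕ,
      (∀ i, B i ⊆ A) ∧
      Pairwise (Function.onFun Disjoint B) ∧
      (∀ i, ubd (B i) = 1) ∧
      (∀ I : Finset ℕ, I.Nonempty → sumset B I ⊆ A) := by
  have hInt : ∀ L, ∃ u, Set.Icc u (u + L) ⊆ A := fun L => exists_interval_of_ubd_one hA L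
  choose g hg using hInt
  obtain ⟨B, h1, h2, h3, h4⟩ := main_construction A g hg
  exact ⟨B, h1, h2, fun i => ubd_eq_one_of_intervals _ (h3 i), h4⟩
end

section
/- Let A be a set of positive integers with upper Banach density δ(A) = 1. For every sequence (ℓ_j)_{j=1}^∞ of positive integers there exists a sequence (b_j)_{j=1}^∞ of positive integers such that b_{j+1} ≥ b_j + ℓ_j for all j ∈ ℕ, and for every nonempty finite set J of positive integers the sumset ∑_{j∈J} [b_j, b_j + ℓ_j − 1] is contained in A. -/
open Filter Set

/- Counting: if every window of length `L` misses a point of `A`, then any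
window of length `n` contains at most `n - n/L` points of `A`. -/
lemma ncard_window_bound {A : Set ℕ} {L : ℕ} (hL : 0 < L)
    (hbad : ∀ v : ℕ, ∃ x, x ∈ Set.Icc v (v + L - 1) ∧ x ∉ A)
    (n u : ℕ) (hn : 0 < n) :
    (A ∩ Set.Icc u (u + n - 1)).ncard ≤ n - n / L := by
  choose x hx1 hx2 using hbad
  set k := n / L with hk
  have hkL : k * L ≤ n := Nat.div_mul_le_self n L
  set y : ℕ → ℕ := fun i => x (u + i * L) with hy
  have hylb : ∀ i, u + i * L ≤ y i := fun i => (hx1 (u + i * L)).1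
  have hyub : ∀ i, y i ≤ u + i * L + L - 1 := fun i => (hx1 (u + i * L)).2
  have hinj : Set.InjOn y ↑(Finset.range k) := by
    intro i _ j _ hij
    by_contra hne
    rcases Nat.lt_or_ge i j with h | h
    · have h1 : i * L + L ≤ j * L := by
        calc i * L + L = (i + 1) * L := by ring
        _ ≤ j * L := Nat.mul_le_mul_right L h
      have := hylb j
      have := hyub i
      omega
    · have h : j < i := lt_of_le_of_ne h (fun e => hne e.symm)
      have h1 : j * L + L ≤ i * L := by
        calc j * L + L = (j + 1) * L := by ring
        _ ≤ i * L := Nat.mul_le_mul_right L h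
      have := hylb i
      have := hyub j
      omega
  set s : Finset ℕ := (Finset.range k).image y with hs
  have hcard : s.card = k := by
    rw [hs, Finset.card_image_of_injOn hinj, Finset.card_range]
  have hssub : (↑s : Set ℕ) ⊆ Set.Icc u (u + n - 1) := by
    intro z hz
    simp only [hs, Finset.coe_image, Finset.coe_range] at hz
    obtain ⟨i, hi, rfl⟩ := hz
    simp only [Set.mem_Iio] at hi
    have h1 := hylb i
    have h2 := hyub i
    have h3 : i * L + L ≤ k * L := by
      calc i * L + L = (i + 1) * L := by ring
      _ ≤ k * L := Nat.mul_le_mul_right L hi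
    constructor <;> omega
  have hsub : A ∩ Set.Icc u (u + n - 1) ⊆ Set.Icc u (u + n - 1) \ ↑s := by
    rintro z ⟨hzA, hzI⟩
    refine ⟨hzI, ?_⟩
    intro hzs
    simp only [hs, Finset.coe_image, Finset.coe_range] at hzs
    obtain ⟨i, _, rfl⟩ := hzs
    exact hx2 _ hzA
  have hfin : (Set.Icc u (u + n - 1)).Finite := Set.finite_Icc _ _
  have hIcc_card : (Set.Icc u (u + n - 1)).ncard = n := by
    rw [← Finset.coe_Icc, Set.ncard_coe_finset, Nat.card_Icc]
    omega
  calc (A ∩ Set.Icc u (u + n - 1)).ncard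
      ≤ (Set.Icc u (u + n - 1) \ ↑s).ncard :=
        Set.ncard_le_ncard hsub (hfin.diff)
    _ = (Set.Icc u (u + n - 1)).ncard - s.card := by
        rw [Set.ncard_diff hssub (s.finite_toSet), Set.ncard_coe_finset]
    _ = n - k := by rw [hIcc_card, hcard]

/-- Density one gives arbitrarily long intervals inside `A`. -/
lemma exists_long_interval {A : Set ℕ} (hA : ubd A = 1) {L : ℕ} (hL : 0 < L) :
    ∃ u, Set.Icc u (u + L - 1) ⊆ A := by
  by_contra h
  push_neg at h
  have hbad : ∀ v : ℕ, ∃ x, x ∈ Set.Icc v (v + L - 1) ∧ x ∉ A := by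
    intro v
    obtain ⟨x, hx1, hx2⟩ := Set.not_subset.mp (h v)
    exact ⟨x, hx1, hx2⟩
  have hbF : ∀ n : ℕ, 0 < n → bF A n ≤ n - n / L := by
    intro n hn
    exact ciSup_le fun u => ncard_window_bound hL hbad n u hn
  have hcob : IsCoboundedUnder (· ≤ ·) atTop (fun n : ℕ => (bF A n : ℝ) / n) :=
    isCoboundedUnder_le_of_le atTop (x := 0)
      (fun n => div_nonneg (Nat.cast_nonneg _) (Nat.cast_nonneg _))
  have hlt : (1 : ℝ) - 1 / (2 * L) < limsup (fun n : ℕ => (bF A n : ℝ) / n) atTop := by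
    rw [show limsup (fun n : ℕ => (bF A n : ℝ) / n) atTop = ubd A from rfl, hA]
    have : (0 : ℝ) < 1 / (2 * L) := by positivity
    linarith
  have hfreq := Filter.frequently_lt_of_lt_limsup hcob hlt
  obtain ⟨n, hn1, hn2⟩ := (hfreq.and_eventually (Filter.eventually_ge_atTop (2 * L))).exists
  -- now derive a contradiction
  have hnpos : 0 < n := by omega
  set d := n / L with hd
  have hdn : d ≤ n := Nat.div_le_self n L
  have h2Ld : n ≤ 2 * L * d := by
    have h := Nat.div_add_mod n L
    have hmod : n % L < L := Nat.mod_lt n hL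
    rw [← hd] at h
    nlinarith [h, hmod, hn2]
  have hbound : bF A n ≤ n - d := hbF n hnpos
  have hreal : (bF A n : ℝ) / n ≤ ((n : ℝ) - d) / n := by
    have h1 : (bF A n : ℝ) ≤ (n : ℝ) - d := by
      have : ((n - d : ℕ) : ℝ) = (n : ℝ) - d := by
        rw [Nat.cast_sub hdn]
      calc (bF A n : ℝ) ≤ ((n - d : ℕ) : ℝ) := Nat.cast_le.mpr hbound
        _ = (n : ℝ) - d := this
    gcongr
  have hfinal : ((n : ℝ) - d) / n ≤ 1 - 1 / (2 * L) := by
    have hn0 : (0 : ℝ) < n := by exact_mod_cast hnpos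
    have hL0 : (0 : ℝ) < 2 * L := by positivity
    rw [div_le_iff₀ hn0]
    have hcast : (n : ℝ) ≤ 2 * L * d := by exact_mod_cast h2Ld
    have h1 : (1 : ℝ) / (2 * L) * n ≤ d := by
      rw [div_mul_eq_mul_div, div_le_iff₀ hL0]
      nlinarith
    nlinarith
  linarith [hn1, hreal.trans hfinal]

/-- Long intervals inside `A`, starting beyond any prescribed bound. -/
lemma exists_long_interval' {A : Set ℕ} (hA : ubd A = 1) (L B : ℕ) :
    ∃ u, 0 < u ∧ B ≤ u ∧ Set.Icc u (u + L - 1) ⊆ A := by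
  obtain ⟨u, hu⟩ := exists_long_interval hA (L := B + L + 1) (by omega)
  refine ⟨max (max u B) 1, by omega, by omega, ?_⟩
  intro z hz
  apply hu
  simp only [Set.mem_Icc] at hz ⊢
  omega

/-- Auxiliary recursion: `(stepFn l pick j).1` is `b j` and `(stepFn l pick j).2`
is `∑_{i ≤ j} (b i + l i)`. -/
noncomputable def stepFn (l : ℕ → ℕ) (pick : ℕ → ℕ → ℕ) : ℕ → ℕ × ℕ
  | 0 => (pick (l 0) 1, pick (l 0) 1 + l 0)
  | j + 1 =>
    let p := stepFn l pick j
    let u := pick (p.2 + l (j + 1)) (p.1 + l j)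
    (u, p.2 + u + l (j + 1))

theorem interval_sumset_theorem (A : Set ℕ) (hApos : ∀ a ∈ A, 0 < a)
    (hA : ubd A = 1) (l : ℕ → ℕ) (hl : ∀ j, 0 < l j) :
    ∃ b : ℕ → ℕ, (∀ j, 0 < b j) ∧ (∀ j, b j + l j ≤ b (j + 1)) ∧
      ∀ J : Finset ℕ, J.Nonempty →
        sumset (fun j => Set.Icc (b j) (b j + l j - 1)) J ⊆ A := by
  choose pick hp1 hp2 hp3 using fun L B => exists_long_interval' hA L B
  set b : ℕ → ℕ := fun j => (stepFn l pick j).1 with hb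
  set S : ℕ → ℕ := fun j => (stepFn l pick j).2 with hS
  have hb0 : b 0 = pick (l 0) 1 := rfl
  have hbs : ∀ j, b (j + 1) = pick (S j + l (j + 1)) (b j + l j) := fun j => rfl
  have hS0 : S 0 = b 0 + l 0 := rfl
  have hSs : ∀ j, S (j + 1) = S j + b (j + 1) + l (j + 1) := fun j => rfl
  have hbpos : ∀ j, 0 < b j := by
    intro j
    cases j with
    | zero => rw [hb0]; exact hp1 _ _
    | succ j => rw [hbs]; exact hp1 _ _
  have hsep : ∀ j, b j + l j ≤ b (j + 1) := by
    intro j; rw [hbs]; exact hp2 _ _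
  have hIcc : ∀ j, Set.Icc (b j) (S j - 1) ⊆ A := by
    intro j
    cases j with
    | zero =>
      have := hp3 (l 0) 1
      rw [← hb0] at this
      rw [hS0]
      have he : b 0 + l 0 - 1 = b 0 + l 0 - 1 := rfl
      exact this
    | succ j =>
      have h := hp3 (S j + l (j + 1)) (b j + l j)
      rw [← hbs] at h
      have he : S (j + 1) - 1 = b (j + 1) + (S j + l (j + 1)) - 1 := by
        rw [hSs]; omega
      rw [he]
      exact h
  have hSsum : ∀ j, S j = ∑ i ∈ Finset.range (j + 1), (b i + l i) := by
    intro j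
    induction j with
    | zero => simp [hS0]
    | succ j ih =>
      rw [Finset.sum_range_succ, ← ih, hSs, Nat.add_assoc]
  refine ⟨b, hbpos, hsep, ?_⟩
  intro J hJ s hs
  obtain ⟨a, ha, rfl⟩ := hs
  set j := J.max' hJ with hjdef
  have hjJ : j ∈ J := J.max'_mem hJ
  have hmax : ∀ i ∈ J, i ≤ j := fun i hi => J.le_max' i hi
  have hlow : b j ≤ ∑ i ∈ J, a i := by
    calc b j ≤ a j := (ha j hjJ).1
    _ ≤ ∑ i ∈ J, a i := Finset.single_le_sum (fun i _ => Nat.zero_le _) hjJ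
  have hup : ∑ i ∈ J, a i < ∑ i ∈ J, (b i + l i) := by
    apply Finset.sum_lt_sum_of_nonempty hJ
    intro i hi
    have h1 := (ha i hi).2
    have h2 := hl i
    simp only [Set.mem_Icc] at h1 ha
    have := (ha i hi).2
    omega
  have hup2 : ∑ i ∈ J, (b i + l i) ≤ S j := by
    rw [hSsum]
    apply Finset.sum_le_sum_of_subset
    intro i hi
    simp only [Finset.mem_range]
    exact Nat.lt_succ_of_le (hmax i hi)
  apply hIcc j
  simp only [Set.mem_Icc]
  omega
end

section
/- Let A = ⋃_{i=1}^∞ [4^i, 4^i + i − 1]. Then the upper Banach density of A equals 1, yet for every infinite subset B of A and every integer t, the set 2B = {2b : b ∈ B} is not contained in A + t = {a + t : a ∈ A}. -/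
open Filter Set

theorem union_example_no_double (A : Set ℕ)
    (hA : A = ⋃ i ∈ Set.Ici 1, Set.Icc (4 ^ i) (4 ^ i + i - 1)) :
    ubd A = 1 ∧
    ∀ B : Set ℕ, B ⊆ A → B.Infinite → ∀ t : ℤ,
      ¬ ({x : ℤ | ∃ b ∈ B, x = 2 * (b : ℤ)} ⊆
          {x : ℤ | ∃ a ∈ A, x = (a : ℤ) + t}) := by
  have hmem : ∀ x, x ∈ A ↔ ∃ i, 1 ≤ i ∧ 4 ^ i ≤ x ∧ x ≤ 4 ^ i + i - 1 := by
    intro x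
    rw [hA]
    simp only [Set.mem_iUnion, Set.mem_Icc, Set.mem_Ici, exists_prop]
  constructor
  · -- density part
    have hbF : ∀ n : ℕ, 1 ≤ n → bF A n = n := by
      intro n hn
      have hIcc : ∀ u : ℕ, (Set.Icc u (u + n - 1)).ncard = n := by
        intro u
        have : (Set.Icc u (u + n - 1)).ncard = (u + n - 1) + 1 - u := by
          simp [Set.ncard_eq_toFinset_card']
        rw [this]; omega
      have hub : ∀ u : ℕ, (A ∩ Set.Icc u (u + n - 1)).ncard ≤ n := by
        intro u
        have h1 : (A ∩ Set.Icc u (u + n - 1)).ncard ≤ (Set.Icc u (u + n - 1)).ncard :=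
          Set.ncard_le_ncard Set.inter_subset_right (Set.finite_Icc _ _)
        rw [hIcc u] at h1; exact h1
      apply le_antisymm
      · exact ciSup_le hub
      · have hsub : Set.Icc (4 ^ n) (4 ^ n + n - 1) ⊆ A := by
          intro x hx
          exact (hmem x).2 ⟨n, hn, hx.1, hx.2⟩
        have hval : (A ∩ Set.Icc (4 ^ n) (4 ^ n + n - 1)).ncard = n := by
          rw [Set.inter_eq_self_of_subset_right hsub, hIcc]
        have hbdd : BddAbove (Set.range fun u : ℕ => (A ∩ Set.Icc u (u + n - 1)).ncard) := by
          refine ⟨n, ?_⟩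
          rintro m ⟨u, rfl⟩
          exact hub u
        calc n = (A ∩ Set.Icc (4 ^ n) (4 ^ n + n - 1)).ncard := hval.symm
          _ ≤ bF A n := le_ciSup hbdd (4 ^ n)
    have heq : ubd A = Filter.limsup (fun _ : ℕ => (1 : ℝ)) Filter.atTop := by
      apply Filter.limsup_congr
      filter_upwards [Filter.eventually_ge_atTop 1] with n hn
      rw [hbF n hn]
      have hn' : (n : ℝ) ≠ 0 := by positivity
      field_simp
    rw [heq, Filter.limsup_const]
  · -- no doubling part
    intro B hBA hBinf t hsub
    set M : ℕ := t.natAbs + 2 with hM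
    obtain ⟨b, hbB, hb⟩ := hBinf.exists_gt (4 ^ M)
    obtain ⟨i, hi1, hbl, hbu⟩ := (hmem b).1 (hBA hbB)
    obtain ⟨a, haA, hax⟩ := hsub ⟨b, hbB, rfl⟩
    obtain ⟨j, hj1, hal, hau⟩ := (hmem a).1 haA
    -- i ≥ M
    have hiM : M ≤ i := by
      have h1 : i < 4 ^ i := Nat.lt_pow_self (by norm_num)
      have h2 : 4 ^ M < 4 ^ (i + 1) := by
        calc 4 ^ M < b := hb
          _ ≤ 4 ^ i + i - 1 := hbu
          _ < 4 ^ (i + 1) := by rw [pow_succ]; omega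
      have := (Nat.pow_lt_pow_iff_right (by norm_num : 1 < 4)).1 h2
      omega
    -- 4^i is large
    have hP : 2 * i + t.natAbs + 2 ≤ 4 ^ i := by
      have h2 : i + 1 ≤ 2 ^ i := Nat.lt_two_pow_self
      have h3 : (4 : ℕ) ^ i = 2 ^ i * 2 ^ i := by
        rw [← Nat.mul_pow]
      have h4 : 2 ^ M ≤ 2 ^ i := Nat.pow_le_pow_right (by norm_num) hiM
      have h5 : M + 1 ≤ 2 ^ M := Nat.lt_two_pow_self
      have h6 : 2 ≤ 2 ^ i := le_trans (by omega) (le_trans h5 h4)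
      nlinarith
    -- integer versions
    have hbu' : b + 1 ≤ 4 ^ i + i := by
      have : (0:ℕ) < 4 ^ i + i := by positivity
      omega
    have hau' : a + 1 ≤ 4 ^ j + j := by
      have : (0:ℕ) < 4 ^ j + j := by positivity
      omega
    have hblZ : (4 : ℤ) ^ i ≤ (b : ℤ) := by exact_mod_cast hbl
    have hbuZ : (b : ℤ) + 1 ≤ 4 ^ i + i := by exact_mod_cast hbu'
    have halZ : (4 : ℤ) ^ j ≤ (a : ℤ) := by exact_mod_cast hal
    have hauZ : (a : ℤ) + 1 ≤ 4 ^ j + j := by exact_mod_cast hau'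
    have hPZ : 2 * (i : ℤ) + t.natAbs + 2 ≤ 4 ^ i := by exact_mod_cast hP
    have ht1 : t ≤ (t.natAbs : ℤ) := Int.le_natAbs
    have ht2 : -(t.natAbs : ℤ) ≤ t := by omega
    have hi0 : (0 : ℤ) ≤ (i : ℤ) := Int.natCast_nonneg i
    have hpow0 : (0 : ℤ) ≤ (4 : ℤ) ^ i := by positivity
    rcases le_or_gt j i with hji | hij
    · have hQP : (4 : ℤ) ^ j ≤ 4 ^ i := by
        have := Nat.pow_le_pow_right (show 1 ≤ 4 by norm_num) hji
        exact_mod_cast this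
      have hjiZ : (j : ℤ) ≤ i := by exact_mod_cast hji
      linarith
    · have hQP : 4 * (4 : ℤ) ^ i ≤ 4 ^ j := by
        have h := Nat.pow_le_pow_right (show 1 ≤ 4 by norm_num) hij
        rw [pow_succ] at h
        have : (4:ℤ) ^ i * 4 ≤ 4 ^ j := by exact_mod_cast h
        linarith
      linarith
end

section
/- Let A = ⋃_{i=1}^∞ [4^i, 4^i + i − 1] and let t ∈ ℕ₀. There exists i₀ ∈ ℕ such that 4^i − i > t for all i ≥ i₀, and for every i ≥ i₀ and every b ∈ [4^i, 4^i + i − 1], the number 2b belongs neither to A + t nor to A − t. -/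
theorem union_example_double_avoids (A : Set ℕ)
    (hA : A = ⋃ i ∈ Set.Ici 1, Set.Icc (4 ^ i) (4 ^ i + i - 1)) (t : ℕ) :
    ∃ i₀ : ℕ, 0 < i₀ ∧ (∀ i, i₀ ≤ i → (t : ℤ) < 4 ^ i - i) ∧
      ∀ i, i₀ ≤ i → ∀ b ∈ Set.Icc (4 ^ i) (4 ^ i + i - 1),
        2 * (b : ℤ) ∉ {x : ℤ | ∃ a ∈ A, x = (a : ℤ) + t} ∧
        2 * (b : ℤ) ∉ {x : ℤ | ∃ a ∈ A, x = (a : ℤ) - t} := by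
  have key : ∀ i : ℕ, t + 2 ≤ i → (t : ℤ) + i < 4 ^ i := by
    intro i hi
    have h2 : (i : ℤ) < 2 ^ i := by exact_mod_cast Nat.lt_two_pow_self (n := i)
    have h2' : (1 : ℤ) ≤ 2 ^ i := one_le_pow₀ (by norm_num)
    have h4 : (4 : ℤ) ^ i = 2 ^ i * 2 ^ i := by rw [← mul_pow]; norm_num
    have hti : (t : ℤ) + 2 ≤ i := by exact_mod_cast hi
    nlinarith [sq_nonneg ((2:ℤ) ^ i - i - 1)]
  refine ⟨t + 2, by omega, fun i hi => by have := key i hi; linarith, ?_⟩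
  intro i hi b hb
  obtain ⟨hb1, hb2⟩ := hb
  have hp : 1 ≤ 4 ^ i := Nat.one_le_pow _ _ (by norm_num)
  have hbz1 : (4 : ℤ) ^ i ≤ b := by exact_mod_cast hb1
  have hbz2 : (b : ℤ) ≤ 4 ^ i + i - 1 := by
    have h : b + 1 ≤ 4 ^ i + i := by omega
    have := (Nat.cast_le (α := ℤ)).2 h
    push_cast at this; linarith
  have hkey := key i hi
  have ht0 : (0 : ℤ) ≤ t := Int.natCast_nonneg t
  constructor <;>
  · rintro ⟨a, ha, heq⟩
    rw [hA] at ha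
    simp only [Set.mem_iUnion, Set.mem_Ici, Set.mem_Icc] at ha
    obtain ⟨j, hj1, ha1, ha2⟩ := ha
    have hpj : 1 ≤ 4 ^ j := Nat.one_le_pow _ _ (by norm_num)
    have haz1 : (4 : ℤ) ^ j ≤ a := by exact_mod_cast ha1
    have haz2 : (a : ℤ) ≤ 4 ^ j + j - 1 := by
      have h : a + 1 ≤ 4 ^ j + j := by omega
      have := (Nat.cast_le (α := ℤ)).2 h
      push_cast at this; linarith
    rcases le_or_gt j i with hji | hji
    · have hle : (4 : ℤ) ^ j ≤ 4 ^ i := pow_le_pow_right₀ (by norm_num) hji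
      have hjile : (j : ℤ) ≤ i := by exact_mod_cast hji
      linarith
    · have hij : i + 1 ≤ j := hji
      have hle : (4 : ℤ) ^ (i + 1) ≤ 4 ^ j := pow_le_pow_right₀ (by norm_num) hij
      have h4i1 : (4 : ℤ) ^ (i + 1) = 4 * 4 ^ i := by ring
      linarith
end
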